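/- Bounded translation correctness: let P be a temporal logic program over 𝒜 with initial part P_I, dynamic part P_D and final part P_F, let λ∈ℕ with λ≥1, and let τ_λ(P) be the regular (non-temporal) disjunctive program over the stamped atoms {a_i : a∈𝒜, 0≤i<λ} defined by τ_λ(P) := {τ_0(r) : r∈P_I} ∪ {τ_k(r) : r∈P_D, 1≤k<λ} ∪ {τ_{λ−1}(r) : r∈P_F}, where for a rule r = (b_1∧…∧b_n → a_1∨…∨a_m), τ_k(r) := (τ_k(b_1)∧…∧τ_k(b_n) → τ_k(a_1)∨…∨τ_k(a_m)) with τ_k(a)=a_k, τ_k(¬a)=¬a_k, τ_k(●a)=a_{k−1}, τ_k(¬●a)=¬a_{k−1}. Let T=(T_i)_{i<λ} be a trace of length λ and X the set of stamped atoms with a_i∈X iff a∈T_i. Then T is a temporal stable model of P (viewed as a temporal theory) if and only if X is a stable model of τ_λ(P). -/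

import Mathlib

inductive Formula (A : Type) : Type
  | atom (a : A)
  | falsum
  | verum
  | conj (φ ψ : Formula A)
  | disj (φ ψ : Formula A)
  | impl (φ ψ : Formula A)
  | prev (φ : Formula A)
  | since (φ ψ : Formula A)
  | trigger (φ ψ : Formula A)
  | next (φ : Formula A)
  | untl (φ ψ : Formula A)
  | release (φ ψ : Formula A)
  | whil (φ ψ : Formula A)

/-- THT satisfaction: `satAux l T H k φ` is `⟨H,T⟩,k ⊨ φ` on traces of length `l`. -/
def satAux {A : Type} (l : ℕ∞) (T : ℕ → Set A) : (ℕ → Set A) → ℕ → Formula A → Prop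
  | H, k, .atom a => a ∈ H k
  | _, _, .falsum => False
  | _, _, .verum => True
  | H, k, .conj φ ψ => satAux l T H k φ ∧ satAux l T H k ψ
  | H, k, .disj φ ψ => satAux l T H k φ ∨ satAux l T H k ψ
  | H, k, .impl φ ψ =>
      (satAux l T H k φ → satAux l T H k ψ) ∧ (satAux l T T k φ → satAux l T T k ψ)
  | H, k, .prev φ => 0 < k ∧ satAux l T H (k - 1) φ
  | H, k, .since φ ψ =>
      ∃ j, j ≤ k ∧ satAux l T H j ψ ∧ ∀ i, j < i → i ≤ k → satAux l T H i φ
  | H, k, .trigger φ ψ =>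
      ∀ j, j ≤ k → satAux l T H j ψ ∨ ∃ i, j < i ∧ i ≤ k ∧ satAux l T H i φ
  | H, k, .next φ => ((k + 1 : ℕ) : ℕ∞) < l ∧ satAux l T H (k + 1) φ
  | H, k, .untl φ ψ =>
      ∃ j, k ≤ j ∧ (j : ℕ∞) < l ∧ satAux l T H j ψ ∧ ∀ i, k ≤ i → i < j → satAux l T H i φ
  | H, k, .release φ ψ =>
      ∀ j, k ≤ j → (j : ℕ∞) < l → satAux l T H j ψ ∨ ∃ i, k ≤ i ∧ i < j ∧ satAux l T H i φ
  | H, k, .whil φ ψ =>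
      (∀ j, k ≤ j → (j : ℕ∞) < l →
          satAux l T H j φ ∨ ∃ i, k ≤ i ∧ i < j ∧ ¬ satAux l T H i ψ)
        ∧
      (∀ j, k ≤ j → (j : ℕ∞) < l →
          satAux l T T j φ ∨ ∃ i, k ≤ i ∧ i < j ∧ ¬ satAux l T T i ψ)

/-- `Sat l H T k φ` : the HT-trace `⟨H,T⟩` of length `l` satisfies `φ` at time `k`. -/
def Sat {A : Type} (l : ℕ∞) (H T : ℕ → Set A) (k : ℕ) (φ : Formula A) : Prop :=
  satAux l T H k φ

/-- `⟨H,T⟩` is an HT-trace of length `l`. -/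
def IsHT {A : Type} (l : ℕ∞) (H T : ℕ → Set A) : Prop :=
  ∀ i : ℕ, (i : ℕ∞) < l → H i ⊆ T i

def TraceLe {A : Type} (l : ℕ∞) (H T : ℕ → Set A) : Prop :=
  ∀ i : ℕ, (i : ℕ∞) < l → H i ⊆ T i

def TraceEq {A : Type} (l : ℕ∞) (H T : ℕ → Set A) : Prop :=
  ∀ i : ℕ, (i : ℕ∞) < l → H i = T i

def TraceLt {A : Type} (l : ℕ∞) (H T : ℕ → Set A) : Prop :=
  TraceLe l H T ∧ ¬ TraceEq l H T

def Formula.neg {A : Type} (φ : Formula A) : Formula A := .impl φ .falsum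
def Formula.always {A : Type} (φ : Formula A) : Formula A := .release .falsum φ
def Formula.ev {A : Type} (φ : Formula A) : Formula A := .untl .verum φ
def Formula.final {A : Type} : Formula A := Formula.neg (.next .verum)
def Formula.wnext {A : Type} (φ : Formula A) : Formula A := .disj (.next φ) .final
def Formula.initial {A : Type} : Formula A := Formula.neg (.prev .verum)
def Formula.wprev {A : Type} (φ : Formula A) : Formula A := .disj (.prev φ) .initial
def Formula.evP {A : Type} (φ : Formula A) : Formula A := .since .verum φ
def Formula.alwP {A : Type} (φ : Formula A) : Formula A := .trigger .falsum φ

/-- THT-equivalence of two formulas. -/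
def ThtEquiv {A : Type} (φ ψ : Formula A) : Prop :=
  ∀ (l : ℕ∞) (H T : ℕ → Set A), IsHT l H T →
    ∀ k : ℕ, (k : ℕ∞) < l → (Sat l H T k φ ↔ Sat l H T k ψ)

/-- `⟨H,T⟩` is a model of the theory `Γ`. -/
def IsModel {A : Type} (l : ℕ∞) (H T : ℕ → Set A) (Γ : Set (Formula A)) : Prop :=
  (0 : ℕ∞) < l ∧ ∀ φ ∈ Γ, Sat l H T 0 φ

/-- `T` (of length `l`) is a temporal stable model of `Γ`. -/
def IsTS {A : Type} (l : ℕ∞) (T : ℕ → Set A) (Γ : Set (Formula A)) : Prop :=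
  IsModel l T T Γ ∧ ∀ H : ℕ → Set A, TraceLt l H T → ¬ IsModel l H T Γ

/-- Finite conjunction of a list of formulas. -/
def bigAnd {B : Type} (L : List (Formula B)) : Formula B := L.foldr .conj .verum

/-- Finite disjunction of a list of formulas. -/
def bigOr {B : Type} (L : List (Formula B)) : Formula B := L.foldr .disj .falsum

/-- Temporal literals: `a`, `¬a`, `●a`, `¬●a`. -/
inductive TLit (A : Type) : Type
  | pos (a : A)
  | neg (a : A)
  | ppos (a : A)
  | pneg (a : A)

/-- A temporal literal as a temporal formula. -/
def TLit.toFormula {A : Type} : TLit A → Formula A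
  | .pos a => .atom a
  | .neg a => Formula.neg (.atom a)
  | .ppos a => .prev (.atom a)
  | .pneg a => Formula.neg (.prev (.atom a))

/-- Regular literals are `a` and `¬a`. -/
def TLit.Regular {A : Type} : TLit A → Prop
  | .pos _ => True
  | .neg _ => True
  | .ppos _ => False
  | .pneg _ => False

/-- A temporal rule `b₁ ∧ … ∧ bₙ → a₁ ∨ … ∨ aₘ` given by its body and head literals. -/
structure TRule (A : Type) : Type where
  body : List (TLit A)
  head : List (TLit A)

/-- A rule is regular if all its literals are regular. -/
def TRule.Regular {A : Type} (r : TRule A) : Prop :=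
  (∀ b ∈ r.body, b.Regular) ∧ (∀ a ∈ r.head, a.Regular)

/-- The implication `B → A` of a rule. -/
def TRule.toFormula {A : Type} (r : TRule A) : Formula A :=
  .impl (bigAnd (r.body.map TLit.toFormula)) (bigOr (r.head.map TLit.toFormula))

/-- The temporal theory of a program with initial part `PI` (rules `B → A`),
dynamic part `PD` (rules `○̂☐(B → A)`) and final part `PF` (rules `☐(F → (B → A))`). -/
def progTheory {A : Type} (PI PD PF : Set (TRule A)) : Set (Formula A) :=
  (TRule.toFormula '' PI)
    ∪ ((fun r : TRule A => Formula.wnext (Formula.always r.toFormula)) '' PD)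
    ∪ ((fun r : TRule A => Formula.always (.impl Formula.final r.toFormula)) '' PF)

/-- Propositional formulas over a set `V` of atoms. -/
inductive PForm (V : Type) : Type
  | atom (v : V)
  | falsum
  | verum
  | conj (f g : PForm V)
  | disj (f g : PForm V)
  | impl (f g : PForm V)

/-- Propositional here-and-there satisfaction `(X,Y) ⊨ f`. -/
def psatAux {V : Type} (Y : Set V) : Set V → PForm V → Prop
  | X, .atom v => v ∈ X
  | _, .falsum => False
  | _, .verum => True
  | X, .conj f g => psatAux Y X f ∧ psatAux Y X g
  | X, .disj f g => psatAux Y X f ∨ psatAux Y X g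
  | X, .impl f g => (psatAux Y X f → psatAux Y X g) ∧ (psatAux Y Y f → psatAux Y Y g)

/-- Propositional here-and-there satisfaction `(X,Y) ⊨ f`. -/
def PSat {V : Type} (X Y : Set V) (f : PForm V) : Prop := psatAux Y X f

/-- `Y` is a stable model of the propositional program `Π`. -/
def StableModel {V : Type} (Y : Set V) (Pi : Set (PForm V)) : Prop :=
  (∀ f ∈ Pi, PSat Y Y f)
    ∧ ∀ X : Set V, X ⊆ Y → X ≠ Y → ¬ (∀ f ∈ Pi, PSat X Y f)

/-- Propositional negation. -/
def PForm.pneg {V : Type} (f : PForm V) : PForm V := .impl f .falsum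

/-- Translation of a temporal literal at time point `k` into a stamped literal. -/
def tauLit {A : Type} (k : ℕ) : TLit A → PForm (A × ℕ)
  | .pos a => .atom (a, k)
  | .neg a => PForm.pneg (.atom (a, k))
  | .ppos a => .atom (a, k - 1)
  | .pneg a => PForm.pneg (.atom (a, k - 1))

/-- Translation of a temporal rule at time point `k`. -/
def tauRule {A : Type} (k : ℕ) (r : TRule A) : PForm (A × ℕ) :=
  .impl ((r.body.map (tauLit k)).foldr .conj .verum)
        ((r.head.map (tauLit k)).foldr .disj .falsum)

/-- The bounded translation `τ_λ(P)` of the program `P = (PI, PD, PF)`. -/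
def tauProg {A : Type} (lam : ℕ) (PI PD PF : Set (TRule A)) : Set (PForm (A × ℕ)) :=
  (tauRule 0 '' PI)
    ∪ { f | ∃ r ∈ PD, ∃ k : ℕ, 1 ≤ k ∧ k < lam ∧ f = tauRule k r }
    ∪ (tauRule (lam - 1) '' PF)

namespace BTCaux

variable {A : Type}

/-- The set of stamped atoms corresponding to a trace, cut at `lam`. -/
def stamp (lam : ℕ) (H : ℕ → Set A) : Set (A × ℕ) :=
  {p | p.2 < lam ∧ p.1 ∈ H p.2}

lemma lit_corr (lam : ℕ) (H T : ℕ → Set A) (k : ℕ) (hk : k < lam)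
    (b : TLit A) (hb : b.Regular ∨ 1 ≤ k) :
    satAux (lam : ℕ∞) T H k b.toFormula ↔
      psatAux (stamp lam T) (stamp lam H) (tauLit k b) := by
  cases b with
  | pos a => simp [TLit.toFormula, tauLit, satAux, psatAux, stamp, hk]
  | neg a => simp [TLit.toFormula, tauLit, Formula.neg, PForm.pneg, satAux, psatAux, stamp, hk]
  | ppos a =>
    have h1 : 1 ≤ k := hb.resolve_left (by simp [TLit.Regular])
    have h2 : k - 1 < lam := lt_of_le_of_lt (Nat.sub_le k 1) hk
    have h0 : 0 < k := h1
    simp [TLit.toFormula, tauLit, satAux, psatAux, stamp, h1, h2, h0]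
  | pneg a =>
    have h1 : 1 ≤ k := hb.resolve_left (by simp [TLit.Regular])
    have h2 : k - 1 < lam := lt_of_le_of_lt (Nat.sub_le k 1) hk
    have h0 : 0 < k := h1
    simp [TLit.toFormula, tauLit, Formula.neg, PForm.pneg, satAux, psatAux, stamp, h1, h2, h0]

lemma body_corr (lam : ℕ) (H T : ℕ → Set A) (k : ℕ) (hk : k < lam)
    (L : List (TLit A)) (hL : ∀ b ∈ L, b.Regular ∨ 1 ≤ k) :
    satAux (lam : ℕ∞) T H k (bigAnd (L.map TLit.toFormula)) ↔
      psatAux (stamp lam T) (stamp lam H) ((L.map (tauLit k)).foldr .conj .verum) := by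
  induction L with
  | nil => simp [bigAnd, satAux, psatAux]
  | cons b L ih =>
    have hb := lit_corr lam H T k hk b (hL b List.mem_cons_self)
    have hrest := ih (fun x hx => hL x (List.mem_cons_of_mem _ hx))
    simp only [List.map_cons, bigAnd, List.foldr_cons, satAux, psatAux] at *
    exact and_congr hb hrest

lemma head_corr (lam : ℕ) (H T : ℕ → Set A) (k : ℕ) (hk : k < lam)
    (L : List (TLit A)) (hL : ∀ b ∈ L, b.Regular ∨ 1 ≤ k) :
    satAux (lam : ℕ∞) T H k (bigOr (L.map TLit.toFormula)) ↔
      psatAux (stamp lam T) (stamp lam H) ((L.map (tauLit k)).foldr .disj .falsum) := by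
  induction L with
  | nil => simp [bigOr, satAux, psatAux]
  | cons b L ih =>
    have hb := lit_corr lam H T k hk b (hL b List.mem_cons_self)
    have hrest := ih (fun x hx => hL x (List.mem_cons_of_mem _ hx))
    simp only [List.map_cons, bigOr, List.foldr_cons, satAux, psatAux] at *
    exact or_congr hb hrest

lemma rule_corr (lam : ℕ) (H T : ℕ → Set A) (k : ℕ) (hk : k < lam)
    (r : TRule A) (hr : r.Regular ∨ 1 ≤ k) :
    satAux (lam : ℕ∞) T H k r.toFormula ↔
      psatAux (stamp lam T) (stamp lam H) (tauRule k r) := by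
  have hB : ∀ b ∈ r.body, b.Regular ∨ 1 ≤ k := by
    intro b hbmem; rcases hr with hr | hr
    · exact Or.inl (hr.1 b hbmem)
    · exact Or.inr hr
  have hA : ∀ b ∈ r.head, b.Regular ∨ 1 ≤ k := by
    intro b hbmem; rcases hr with hr | hr
    · exact Or.inl (hr.2 b hbmem)
    · exact Or.inr hr
  simp only [TRule.toFormula, tauRule, satAux, psatAux]
  exact and_congr
    (imp_congr (body_corr lam H T k hk _ hB) (head_corr lam H T k hk _ hA))
    (imp_congr (body_corr lam T T k hk _ hB) (head_corr lam T T k hk _ hA))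

lemma rule_T_of_H (l : ℕ∞) (H T : ℕ → Set A) (k : ℕ) (r : TRule A)
    (h : satAux l T H k r.toFormula) : satAux l T T k r.toFormula := by
  simp only [TRule.toFormula, satAux] at *
  exact ⟨h.2, h.2⟩

lemma wnext_always (lam : ℕ) (H T : ℕ → Set A) (φ : Formula A) :
    satAux (lam : ℕ∞) T H 0 (Formula.wnext (Formula.always φ)) ↔
      ∀ k : ℕ, 1 ≤ k → k < lam → satAux (lam : ℕ∞) T H k φ := by
  have hcast : ∀ m : ℕ, ((m : ℕ) : ℕ∞) < (lam : ℕ∞) ↔ m < lam := fun m => Nat.cast_lt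
  simp only [Formula.wnext, Formula.always, Formula.final, Formula.neg, satAux,
    zero_add, hcast]
  constructor
  · rintro (⟨h1, h2⟩ | ⟨h1, -⟩)
    · intro k hk1 hk2
      rcases h2 k hk1 (Nat.cast_lt.mpr hk2) with h | ⟨i, -, -, hfalse⟩
      · exact h
      · exact hfalse.elim
    · intro k hk1 hk2
      exact absurd (lt_of_le_of_lt hk1 hk2) (by simpa using h1)
  · intro h
    by_cases h1 : 1 < lam
    · exact Or.inl ⟨h1, fun j hj1 hj2 => Or.inl (h j hj1 (Nat.cast_lt.mp hj2))⟩
    · exact Or.inr ⟨fun hc => h1 hc.1, fun hc => h1 hc.1⟩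

lemma always_final (lam : ℕ) (hlam : 1 ≤ lam) (H T : ℕ → Set A) (r : TRule A) :
    satAux (lam : ℕ∞) T H 0 (Formula.always (.impl Formula.final r.toFormula)) ↔
      satAux (lam : ℕ∞) T H (lam - 1) r.toFormula := by
  have hfin : ∀ (H' : ℕ → Set A) (j : ℕ),
      satAux (lam : ℕ∞) T H' j Formula.final ↔ ¬ (j + 1 < lam) := by
    intro H' j
    simp only [Formula.final, Formula.neg, satAux, and_true]
    constructor
    · rintro ⟨hc1, -⟩ hc; exact hc1 (Nat.cast_lt.mpr hc)
    · intro h; exact ⟨fun hc => h (Nat.cast_lt.mp hc), fun hc => h (Nat.cast_lt.mp hc)⟩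
  constructor
  · intro h
    have hlt : lam - 1 < lam := Nat.sub_lt hlam one_pos
    rcases h (lam - 1) (Nat.zero_le _) (Nat.cast_lt.mpr hlt) with h | ⟨i, -, -, hfalse⟩
    · exact h.1 ((hfin H (lam - 1)).mpr (by omega))
    · exact hfalse.elim
  · intro h j _ hj
    refine Or.inl ⟨fun hf => ?_, fun hf => ?_⟩
    · have : j = lam - 1 := by
        have := (hfin H j).mp hf
        have := Nat.cast_lt.mp hj
        omega
      exact this ▸ h
    · have : j = lam - 1 := by
        have := (hfin T j).mp hf
        have := Nat.cast_lt.mp hj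
        omega
      exact this ▸ rule_T_of_H _ _ _ _ _ h

lemma model_iff (PI PD PF : Set (TRule A))
    (hI : ∀ r ∈ PI, r.Regular) (hF : ∀ r ∈ PF, r.Regular)
    (lam : ℕ) (hlam : 1 ≤ lam) (H T : ℕ → Set A) :
    IsModel (lam : ℕ∞) H T (progTheory PI PD PF) ↔
      ∀ f ∈ tauProg lam PI PD PF, PSat (stamp lam H) (stamp lam T) f := by
  have h0 : (0 : ℕ∞) < (lam : ℕ∞) := by exact_mod_cast hlam
  constructor
  · rintro ⟨-, hsat⟩ f hf
    rcases hf with (⟨r, hr, rfl⟩ | ⟨r, hr, k, hk1, hk2, rfl⟩) | ⟨r, hr, rfl⟩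
    · have := hsat r.toFormula (Or.inl (Or.inl ⟨r, hr, rfl⟩))
      exact (rule_corr lam H T 0 hlam r (Or.inl (hI r hr))).mp this
    · have := hsat _ (Or.inl (Or.inr ⟨r, hr, rfl⟩))
      have := (wnext_always lam H T r.toFormula).mp this k hk1 hk2
      exact (rule_corr lam H T k hk2 r (Or.inr hk1)).mp this
    · have := hsat _ (Or.inr ⟨r, hr, rfl⟩)
      have := (always_final lam hlam H T r).mp this
      exact (rule_corr lam H T (lam - 1) (Nat.sub_lt hlam one_pos) r
        (Or.inl (hF r hr))).mp this
  · intro hsat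
    refine ⟨h0, ?_⟩
    rintro φ ((⟨r, hr, rfl⟩ | ⟨r, hr, rfl⟩) | ⟨r, hr, rfl⟩)
    · exact (rule_corr lam H T 0 hlam r (Or.inl (hI r hr))).mpr
        (hsat _ (Or.inl (Or.inl ⟨r, hr, rfl⟩)))
    · refine (wnext_always lam H T r.toFormula).mpr ?_
      intro k hk1 hk2
      exact (rule_corr lam H T k hk2 r (Or.inr hk1)).mpr
        (hsat _ (Or.inl (Or.inr ⟨r, hr, k, hk1, hk2, rfl⟩)))
    · exact (always_final lam hlam H T r).mpr
        ((rule_corr lam H T (lam - 1) (Nat.sub_lt hlam one_pos) r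
          (Or.inl (hF r hr))).mpr (hsat _ (Or.inr ⟨r, hr, rfl⟩)))

end BTCaux

/-- Bounded translation correctness: for a temporal logic program `P` (regular
initial and final rules) and trace `T` of finite length `λ ≥ 1`, `T` is a
temporal stable model of `P` iff the corresponding set of stamped atoms
`X = {(a,i) : i < λ, a ∈ T_i}` is a stable model of `τ_λ(P)`. -/
theorem bounded_translation_correct {A : Type} (PI PD PF : Set (TRule A))
    (hI : ∀ r ∈ PI, r.Regular) (hF : ∀ r ∈ PF, r.Regular)
    (lam : ℕ) (hlam : 1 ≤ lam) (T : ℕ → Set A) :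
    IsTS (lam : ℕ∞) T (progTheory PI PD PF) ↔
      StableModel {p : A × ℕ | p.2 < lam ∧ p.1 ∈ T p.2} (tauProg lam PI PD PF) := by
  have hY : {p : A × ℕ | p.2 < lam ∧ p.1 ∈ T p.2} = BTCaux.stamp lam T := rfl
  rw [hY]
  constructor
  · rintro ⟨hmod, hmin⟩
    refine ⟨(BTCaux.model_iff PI PD PF hI hF lam hlam T T).mp hmod, ?_⟩
    intro X hXY hXne hsat
    set H : ℕ → Set A := fun i => {a | (a, i) ∈ X} with hH
    have hstampH : BTCaux.stamp lam H = X := by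
      ext ⟨a, i⟩
      simp only [BTCaux.stamp, Set.mem_setOf_eq, hH]
      exact ⟨fun h => h.2, fun h => ⟨(hXY h).1, h⟩⟩
    have hmodH : IsModel (lam : ℕ∞) H T (progTheory PI PD PF) := by
      refine (BTCaux.model_iff PI PD PF hI hF lam hlam H T).mpr ?_
      rw [hstampH]; exact hsat
    refine hmin H ⟨?_, ?_⟩ hmodH
    · intro i _ a ha
      exact (hXY ha).2
    · intro heq
      apply hXne
      ext ⟨a, i⟩
      constructor
      · exact fun h => hXY h
      · rintro ⟨hi, ha⟩
        have : H i = T i := heq i (Nat.cast_lt.mpr hi)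
        have : a ∈ H i := this ▸ ha
        exact this
  · rintro ⟨hsat, hmin⟩
    refine ⟨(BTCaux.model_iff PI PD PF hI hF lam hlam T T).mpr hsat, ?_⟩
    intro H hHT hmodH
    refine hmin (BTCaux.stamp lam H) ?_ ?_
      ((BTCaux.model_iff PI PD PF hI hF lam hlam H T).mp hmodH)
    · rintro ⟨a, i⟩ ⟨hi, ha⟩
      exact ⟨hi, hHT.1 i (Nat.cast_lt.mpr hi) ha⟩
    · intro heq
      apply hHT.2
      intro i hi
      ext a
      have := Set.ext_iff.mp heq (a, i)
      simp only [BTCaux.stamp, Set.mem_setOf_eq] at this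
      have hi' : i < lam := Nat.cast_lt.mp hi
      constructor
      · intro ha; exact (this.mp ⟨hi', ha⟩).2
      · intro ha; exact (this.mpr ⟨hi', ha⟩).2
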